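/- Let Q be a quantity space over a scalar system K with a basis of n elements. Then the quotient monoid Q/~ of Q by the equidimensionality congruence is a free abelian group of rank n; i.e., Q/~ is isomorphic as a group to the free abelian group on n generators (multiplicatively, to Multiplicative (Fin n → ℤ)). -/
import Mathlib


/-- A *scalable (commutative) monoid* over a scalar system `K ⊆ F`:
`K` is a subset of the field `F` closed under addition, containing `1`,
closed under multiplication and under inverses of nonzero elements
(so the nonzero elements of `K` form a group under multiplication),
together with a scalar multiplication `smul` satisfying the axioms
`1 • q = q`, `α • (β • q) = (α β) • q` and `α • (q * q') = (α • q) * q'`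
for scalars in `K`. -/
structure ScalableMonoid (F : Type*) [Field F] (Q : Type*) [CommMonoid Q] where
  K : Set F
  one_mem : (1 : F) ∈ K
  add_mem : ∀ {a b : F}, a ∈ K → b ∈ K → a + b ∈ K
  mul_mem : ∀ {a b : F}, a ∈ K → b ∈ K → a * b ∈ K
  inv_mem : ∀ {a : F}, a ∈ K → a ≠ 0 → a⁻¹ ∈ K
  smul : F → Q → Q
  smul_one : ∀ q : Q, smul 1 q = q
  smul_smul : ∀ {a b : F}, a ∈ K → b ∈ K → ∀ q : Q, smul a (smul b q) = smul (a * b) q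
  smul_mul : ∀ {a : F}, a ∈ K → ∀ q q' : Q, smul a (q * q') = smul a q * q'

/-- `b : Fin n → Qˣ` (a list of invertible quantities) is a basis for the scalable
monoid `M` if every quantity has a unique expansion `q = μ • ∏ i, b i ^ k i`
with `μ ∈ K` and integer exponents `k`. -/
def ScalableMonoid.IsBasis {F : Type*} [Field F] {Q : Type*} [CommMonoid Q]
    (M : ScalableMonoid F Q) {n : ℕ} (b : Fin n → Qˣ) : Prop :=
  ∀ q : Q, ∃! p : M.K × (Fin n → ℤ),
    q = M.smul (p.1 : F) (↑(∏ i, b i ^ p.2 i) : Q)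

/-- A quantity space is a scalable monoid having a (finite) basis. -/
def ScalableMonoid.IsQuantitySpace {F : Type*} [Field F] {Q : Type*} [CommMonoid Q]
    (M : ScalableMonoid F Q) : Prop :=
  ∃ (n : ℕ) (b : Fin n → Qˣ), M.IsBasis b

/-- The measure `μ_B(q)`: the unique scalar in the expansion of `q` relative to
the basis `B`. -/
noncomputable def ScalableMonoid.measure {F : Type*} [Field F] {Q : Type*} [CommMonoid Q]
    (M : ScalableMonoid F Q) {n : ℕ} {b : Fin n → Qˣ} (hB : M.IsBasis b) (q : Q) : F :=
  ((hB q).choose.1 : F)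

/-- Quantities `q, q'` are equidimensional (`q ~ q'`) if `α • q = β • q'`
for some scalars `α, β ∈ K`. -/
def ScalableMonoid.Equidim {F : Type*} [Field F] {Q : Type*} [CommMonoid Q]
    (M : ScalableMonoid F Q) (q q' : Q) : Prop :=
  ∃ α β : F, α ∈ M.K ∧ β ∈ M.K ∧ M.smul α q = M.smul β q'

namespace ScalableMonoid

variable {F : Type*} [Field F] {Q : Type*} [CommMonoid Q]
  (M : ScalableMonoid F Q) {n : ℕ} {b : Fin n → Qˣ}

/-- The exponent vector in the unique expansion. -/
noncomputable def exps (hB : M.IsBasis b) (q : Q) : Fin n → ℤ := (hB q).choose.2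

lemma exps_spec (hB : M.IsBasis b) (q : Q) :
    q = M.smul ((hB q).choose.1 : F) (↑(∏ i, b i ^ (M.exps hB q) i)) :=
  (hB q).choose_spec.1

lemma exps_unique (hB : M.IsBasis b) {q : Q} {α : F} (hα : α ∈ M.K) {k : Fin n → ℤ}
    (h : q = M.smul α (↑(∏ i, b i ^ k i))) : M.exps hB q = k := by
  have h2 := (hB q).choose_spec.2 (⟨⟨α, hα⟩, k⟩ : M.K × (Fin n → ℤ)) h
  have : M.exps hB q = ((⟨⟨α, hα⟩, k⟩ : M.K × (Fin n → ℤ))).2 := by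
    rw [exps, h2]
  simpa using this

lemma smul_mul_smul {α β : F} (hα : α ∈ M.K) (hβ : β ∈ M.K) (x y : Q) :
    M.smul α x * M.smul β y = M.smul (α * β) (x * y) := by
  rw [← M.smul_mul hα, mul_comm x, ← M.smul_mul hβ, M.smul_smul hα hβ, mul_comm y x]

lemma exps_smul (hB : M.IsBasis b) {α : F} (hα : α ∈ M.K) (q : Q) :
    M.exps hB (M.smul α q) = M.exps hB q := by
  have h := M.exps_spec hB q
  have hμ := (hB q).choose.1.2
  refine M.exps_unique hB (M.mul_mem hα hμ) ?_
  conv_lhs => rw [h]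
  rw [M.smul_smul hα hμ]

lemma exps_mul (hB : M.IsBasis b) (q q' : Q) :
    M.exps hB (q * q') = M.exps hB q + M.exps hB q' := by
  have h := M.exps_spec hB q
  have h' := M.exps_spec hB q'
  have hμ := (hB q).choose.1.2
  have hμ' := (hB q').choose.1.2
  apply M.exps_unique hB (M.mul_mem hμ hμ')
  have hp : (↑(∏ i, b i ^ (M.exps hB q + M.exps hB q') i) : Q)
      = ↑(∏ i, b i ^ M.exps hB q i) * ↑(∏ i, b i ^ M.exps hB q' i) := by
    push_cast [Pi.add_apply, zpow_add, Finset.prod_mul_distrib]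
    ring
  rw [hp, ← M.smul_mul_smul hμ hμ', ← h, ← h']

lemma exps_prod (hB : M.IsBasis b) (k : Fin n → ℤ) :
    M.exps hB (↑(∏ i, b i ^ k i)) = k :=
  M.exps_unique hB M.one_mem (by rw [M.smul_one])

lemma exps_eq_imp_equidim (hB : M.IsBasis b) {q q' : Q}
    (h : M.exps hB q = M.exps hB q') : M.Equidim q q' := by
  have h1 := M.exps_spec hB q
  have h2 := M.exps_spec hB q'
  have hμ := (hB q).choose.1.2
  have hμ' := (hB q').choose.1.2
  refine ⟨_, _, hμ', hμ, ?_⟩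
  conv_lhs => rw [h1]
  conv_rhs => rw [h2]
  rw [M.smul_smul hμ' hμ, M.smul_smul hμ hμ', mul_comm, h]

end ScalableMonoid

/-- for a quantity space with a basis of `n` elements, the
quotient `Q/~` by the equidimensionality congruence is a free abelian group of
rank `n`: it is isomorphic (as a multiplicative monoid, hence as a group) to
`Multiplicative (Fin n → ℤ)`. -/
theorem quotient_free_abelian {F : Type*} [Field F] {Q : Type*} [CommMonoid Q]
    (M : ScalableMonoid F Q) {n : ℕ} {b : Fin n → Qˣ} (hB : M.IsBasis b)
    (c : Con Q) (hc : ∀ a b : Q, c a b ↔ M.Equidim a b) :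
    Nonempty (c.Quotient ≃* Multiplicative (Fin n → ℤ)) := by
  classical
  let φ : Q →* Multiplicative (Fin n → ℤ) :=
    { toFun := fun q => Multiplicative.ofAdd (M.exps hB q)
      map_one' := by
        have : M.exps hB (1 : Q) = 0 := by
          apply M.exps_unique hB M.one_mem
          simp [M.smul_one]
        simp [this]
      map_mul' := fun q q' => by
        simp [M.exps_mul hB q q', ofAdd_add] }
  have hφ : ∀ a a' : Q, c a a' → φ a = φ a' := by
    intro a a' hca
    obtain ⟨α, β, hα, hβ, hs⟩ := (hc a a').mp hca
    have : M.exps hB a = M.exps hB a' := by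
      rw [← M.exps_smul hB hα a, hs, M.exps_smul hB hβ]
    simpa [φ] using congrArg Multiplicative.ofAdd this
  let ψ : c.Quotient →* Multiplicative (Fin n → ℤ) := Con.lift c φ (by
    intro a a' h; exact hφ a a' h)
  have hbij : Function.Bijective ψ := by
    constructor
    · intro x y hxy
      induction x using Con.induction_on with
      | _ q =>
      induction y using Con.induction_on with
      | _ q' =>
      have hexp : M.exps hB q = M.exps hB q' := by
        have : φ q = φ q' := hxy
        simpa [φ] using this
      exact (Con.eq c).mpr ((hc q q').mpr (M.exps_eq_imp_equidim hB hexp))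
    · intro k
      refine ⟨(↑(∏ i, b i ^ (Multiplicative.toAdd k) i) : Q), ?_⟩
      show Multiplicative.ofAdd (M.exps hB (↑(∏ i, b i ^ (Multiplicative.toAdd k) i) : Q)) = k
      rw [M.exps_prod hB, ofAdd_toAdd]
  exact ⟨MulEquiv.ofBijective ψ hbij⟩
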